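/- Let m ≥ 2 and p be positive integers with gcd(m, p) = t ≠ 1, and let P be a finite set of positive integers containing p. Then for every positive integer a, the set S_a = {0} ∪ {m + kt : k ∈ ℕ} ∪ {x ∈ ℕ : x ≥ a·m} is a numerical semigroup with multiplicity m that is a P-semigroup; in particular, the set of P-semigroups with multiplicity m is infinite. -/
import Mathlib


/-- A numerical semigroup: a cofinite submonoid of `ℕ`. -/
def IsNumSgp (S : Set ℕ) : Prop :=
  0 ∈ S ∧ (∀ x ∈ S, ∀ y ∈ S, x + y ∈ S) ∧ Sᶜ.Finite

/-- `S` is a `P`-semigroup: for every nonzero `s ∈ S` there is `p ∈ P` with `s + p ∈ S`. -/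
def IsPSgpN (P : Finset ℕ) (S : Set ℕ) : Prop :=
  ∀ s ∈ S, s ≠ 0 → ∃ p ∈ P, s + p ∈ S

/-- `m` is the multiplicity of `S`, i.e. its least nonzero element. -/
def HasMult (S : Set ℕ) (m : ℕ) : Prop :=
  m ∈ S ∧ m ≠ 0 ∧ ∀ s ∈ S, s ≠ 0 → m ≤ s

lemma mem_Sa_iff (m t a x : ℕ) :
    x ∈ ({0} ∪ {x | ∃ k : ℕ, x = m + k * t} ∪ {x | a * m ≤ x} : Set ℕ) ↔
      x = 0 ∨ (∃ k : ℕ, x = m + k * t) ∨ a * m ≤ x := by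
  simp [Set.mem_union, Set.mem_setOf_eq, or_assoc]

lemma Sa_props (m t a : ℕ) (hm : 2 ≤ m) (ht2 : 2 ≤ t) (htm : t ∣ m)
    (p : ℕ) (htp : t ∣ p) (P : Finset ℕ) (hpP : p ∈ P) (ha : 0 < a) :
    IsNumSgp ({0} ∪ {x | ∃ k : ℕ, x = m + k * t} ∪ {x | a * m ≤ x}) ∧
    HasMult ({0} ∪ {x | ∃ k : ℕ, x = m + k * t} ∪ {x | a * m ≤ x}) m ∧
    IsPSgpN P ({0} ∪ {x | ∃ k : ℕ, x = m + k * t} ∪ {x | a * m ≤ x}) := by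
  obtain ⟨c, hc⟩ := htm
  obtain ⟨d, hd⟩ := htp
  refine ⟨⟨?_, ?_, ?_⟩, ⟨?_, ?_, ?_⟩, ?_⟩
  · rw [mem_Sa_iff]; left; rfl
  · intro x hx y hy
    rw [mem_Sa_iff] at hx hy ⊢
    rcases hx with rfl | ⟨k, rfl⟩ | hx
    · simpa using hy
    · rcases hy with rfl | ⟨l, rfl⟩ | hy
      · right; left; exact ⟨k, by ring⟩
      · right; left
        refine ⟨k + l + c, ?_⟩
        rw [hc]; ring
      · right; right; omega
    · right; right; omega
  · apply Set.Finite.subset (Set.finite_Iio (a * m))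
    intro x hx
    simp only [Set.mem_compl_iff, mem_Sa_iff] at hx
    push_neg at hx
    exact hx.2.2
  · rw [mem_Sa_iff]; right; left; exact ⟨0, by ring⟩
  · omega
  · intro s hs hs0
    rw [mem_Sa_iff] at hs
    rcases hs with rfl | ⟨k, rfl⟩ | hs
    · omega
    · omega
    · nlinarith
  · intro s hs hs0
    refine ⟨p, hpP, ?_⟩
    rw [mem_Sa_iff] at hs ⊢
    rcases hs with rfl | ⟨k, rfl⟩ | hs
    · omega
    · right; left; exact ⟨k + d, by rw [hd]; ring⟩
    · right; right; omega

lemma Sa_ne (m t a b : ℕ) (hm : 2 ≤ m) (ht2 : 2 ≤ t) (htm : t ∣ m)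
    (ha : 0 < a) (hab : a < b) :
    ({0} ∪ {x | ∃ k : ℕ, x = m + k * t} ∪ {x | a * m ≤ x} : Set ℕ) ≠
      ({0} ∪ {x | ∃ k : ℕ, x = m + k * t} ∪ {x | b * m ≤ x}) := by
  intro h
  have hmem : a * m + 1 ∈ ({0} ∪ {x | ∃ k : ℕ, x = m + k * t} ∪ {x | a * m ≤ x} : Set ℕ) := by
    rw [mem_Sa_iff]; right; right; omega
  rw [h, mem_Sa_iff] at hmem
  rcases hmem with h0 | ⟨k, hk⟩ | hb
  · omega
  · -- t divides m + k*t and a*m, hence t ∣ 1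
    have h1 : t ∣ m + k * t := dvd_add htm (dvd_mul_left t k)
    rw [← hk] at h1
    have h2 : t ∣ a * m := Dvd.dvd.mul_left htm a
    have h3 : t ∣ 1 := (Nat.dvd_add_right h2).mp h1
    have := Nat.le_of_dvd one_pos h3
    omega
  · have : (a + 1) * m ≤ b * m := Nat.mul_le_mul_right m (by omega)
    nlinarith

theorem stmt_9 (m p t : ℕ) (hm : 2 ≤ m) (hp : 0 < p)
    (ht : t = Nat.gcd m p) (ht1 : t ≠ 1)
    (P : Finset ℕ) (hPpos : ∀ q ∈ P, 0 < q) (hpP : p ∈ P) :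
    (∀ a : ℕ, 0 < a →
      IsNumSgp ({0} ∪ {x | ∃ k : ℕ, x = m + k * t} ∪ {x | a * m ≤ x}) ∧
      HasMult ({0} ∪ {x | ∃ k : ℕ, x = m + k * t} ∪ {x | a * m ≤ x}) m ∧
      IsPSgpN P ({0} ∪ {x | ∃ k : ℕ, x = m + k * t} ∪ {x | a * m ≤ x})) ∧
    {S : Set ℕ | IsNumSgp S ∧ HasMult S m ∧ IsPSgpN P S}.Infinite := by
  have htm : t ∣ m := ht ▸ Nat.gcd_dvd_left m p
  have htp : t ∣ p := ht ▸ Nat.gcd_dvd_right m p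
  have ht0 : t ≠ 0 := by
    intro h0
    have := Nat.eq_zero_of_gcd_eq_zero_left (ht ▸ h0 : Nat.gcd m p = 0)
    omega
  have ht2 : 2 ≤ t := by omega
  constructor
  · intro a ha
    exact Sa_props m t a hm ht2 htm p htp P hpP ha
  · apply Set.infinite_of_injective_forall_mem
      (f := fun n : ℕ => ({0} ∪ {x | ∃ k : ℕ, x = m + k * t} ∪ {x | (n + 1) * m ≤ x} : Set ℕ))
    · intro a b hab
      by_contra hne
      rcases Nat.lt_or_ge a b with h | h
      · exact Sa_ne m t (a + 1) (b + 1) hm ht2 htm (by omega) (by omega) hab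
      · have h' : b < a := by omega
        exact Sa_ne m t (b + 1) (a + 1) hm ht2 htm (by omega) (by omega) hab.symm
    · intro n
      exact Sa_props m t (n + 1) hm ht2 htm p htp P hpP (by omega)
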